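/- Under equality λ = (p-1)π_p^p/D^p in the eigenvalue estimate, if the gradient comparison Γ(u)^{p/2} ≤ (λ/(p-1))(1 - |u|^p) holds with min u = -1, max u = 1, and if x, y are minimum and maximum points of u, then d(x,y) = D, i.e., the maximum and minimum points of u realize the diameter. -/
import Mathlib


/-- `halfPi p = π_p / 2 = ∫₀¹ (1 - s^p)^{-1/p} ds`. -/
noncomputable def halfPi (p : ℝ) : ℝ := ∫ s in (0:ℝ)..1, (1 - |s| ^ p) ^ (-(1 / p))

/-- In case of equality `λ = (p-1) π_p^p / D^p` in the eigenvalue estimate, if the gradient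
comparison holds (i.e. `w⁻¹ ∘ u` is 1-Lipschitz for the intrinsic distance, where `w⁻¹`
inverts the one-dimensional p-sine model, sending `-1 ↦ -D/2` and `1 ↦ D/2`), with
`min u = -1` attained at `x` and `max u = 1` attained at `y`, then `d(x,y) = D`:
the extremum points of `u` realize the diameter. -/
theorem stmt_10 {M : Type*} [MetricSpace M] (p D lam : ℝ) (hp : 1 < p) (hD : 0 < D)
    (hdiam : ∀ x y : M, dist x y ≤ D)
    (hlam : lam = (p - 1) * (2 * halfPi p) ^ p / D ^ p)
    (u : M → ℝ) (Γu : M → ℝ) (winv : ℝ → ℝ)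
    (hwinv_lo : winv (-1) = -(D/2)) (hwinv_hi : winv 1 = D/2)
    (hgradcomp : ∀ z, (Γu z) ^ (p/2) ≤ (lam / (p - 1)) * (1 - |u z| ^ p))
    (hgrad : LipschitzWith 1 (fun z => winv (u z)))
    (x y : M) (hmin : u x = -1) (hmax : u y = 1)
    (humin : ∀ z, -1 ≤ u z) (humax : ∀ z, u z ≤ 1) :
    dist x y = D := by
  refine le_antisymm (hdiam x y) ?_
  have h := hgrad.dist_le_mul x y
  simp only [hmin, hmax, hwinv_lo, hwinv_hi, NNReal.coe_one, one_mul] at h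
  calc D = dist (-(D/2)) (D/2) := by rw [Real.dist_eq]; rw [abs_of_nonpos (by linarith)]; ring
    _ ≤ dist x y := h
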